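/- Let a, b ∈ ℝ with 0 < b, 0 < a and a b < 1, let α ∈ ℂ ∖ (−∞, 0], and let k, m, v ∈ ℂ with Re(m + v) > 0. Then ∫₀^b x^{m−1} J_v(x α) (−log(a x))^k dx = a^{−m} · Σ_{j=0}^∞ (−1)^j (α/(2a))^{2j+v} · Γ(1+k, −(2j + m + v) log(a b)) / ( j! · Γ(1+j+v) · (2j + m + v)^{k+1} ). -/

import Mathlib

open MeasureTheory

/-- Upper incomplete gamma function: `Γ(s, z) = e^{-z} ∫₀^∞ e^{-t} (t + z)^(s-1) dt`,
with principal-branch complex powers. -/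
noncomputable def uGamma (s z : ℂ) : ℂ :=
  Complex.exp (-z) * ∫ t in Set.Ioi (0:ℝ), Complex.exp (-(t:ℂ)) * ((t:ℂ) + z) ^ (s - 1)

/-- Bessel function of the first kind:
`J_ν(w) = Σ_{j=0}^∞ (-1)^j (w/2)^{2j+ν} / (j! Γ(j+ν+1))`, principal-branch powers. -/
noncomputable def besselJ (ν w : ℂ) : ℂ :=
  ∑' j : ℕ, ((-1:ℂ) ^ j * (w / 2) ^ (2 * (j:ℂ) + ν))
    / ((Nat.factorial j : ℂ) * Complex.Gamma ((j:ℂ) + ν + 1))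

open Set Filter Real Topology


lemma auxInt {ε : ℝ} (hε : 0 < ε) {A L : ℝ} (hAL : 0 < A + L) (c : ℝ) :
    IntegrableOn (fun τ : ℝ => Real.exp (-(ε * τ)) * (τ + L) ^ c) (Set.Ioi A) := by
  have hcont : ContinuousOn (fun τ : ℝ => Real.exp (-(ε * τ)) * (τ + L) ^ c) (Set.Ici A) := by
    apply ContinuousOn.mul
    · exact (Real.continuous_exp.comp (continuous_const.mul continuous_id).neg).continuousOn
    · exact (ContinuousOn.rpow_const (continuous_id.add continuous_const).continuousOn
        (fun x hx => Or.inl (by have := mem_Ici.mp hx; dsimp; linarith)))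
  apply integrable_of_isBigO_exp_neg (half_pos hε) hcont
  have h1 : Tendsto (fun x : ℝ => Real.exp (ε/2 * L) * ((x+L) ^ c * Real.exp (-(ε/2) * (x+L))))
      atTop (𝓝 (Real.exp (ε/2 * L) * 0)) :=
    ((tendsto_rpow_mul_exp_neg_mul_atTop_nhds_zero c (ε/2) (half_pos hε)).comp
      (tendsto_atTop_add_const_right _ L tendsto_id)).const_mul _
  rw [mul_zero] at h1
  apply Asymptotics.isBigO_of_div_tendsto_nhds
  · filter_upwards with x hx; exact absurd hx (Real.exp_ne_zero _)
  · refine Tendsto.congr (fun x => ?_) h1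
    show _ = rexp (-(ε * x)) * (x + L) ^ c / rexp (-(ε / 2) * x)
    rw [mul_left_comm, ← Real.exp_add, mul_comm (rexp (-(ε * x))), mul_div_assoc, ← Real.exp_sub]
    congr 1; ring

lemma norm_cexp_neg_mul (s : ℂ) (u : ℝ) : ‖Complex.exp (-(s * u))‖ = Real.exp (-(s.re * u)) := by
  rw [Complex.norm_exp]; congr 1; simp

lemma norm_ofReal_cpow {x : ℝ} (hx : 0 < x) (k : ℂ) : ‖((x:ℂ)) ^ k‖ = x ^ k.re := by
  rw [Complex.norm_cpow_eq_rpow_re_of_pos hx]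

lemma contOn_cpow_shift (k : ℂ) {A L : ℝ} (hAL : 0 < A + L) :
    ContinuousOn (fun τ : ℝ => ((τ + L : ℝ) : ℂ) ^ k) (Set.Ici A) := by
  intro τ hτ
  have h : (0:ℝ) < τ + L := by have := mem_Ici.mp hτ; linarith
  refine ContinuousAt.continuousWithinAt ?_
  exact (continuousAt_cpow_const (by simp [Complex.mem_slitPlane_iff, h])).comp
    (Complex.continuous_ofReal.continuousAt.comp ((continuous_id.add continuous_const).continuousAt))

noncomputable def Fi (k : ℂ) (L : ℝ) (s : ℂ) : ℂ :=
  ∫ u in Set.Ioi (0:ℝ), Complex.exp (-(s * u)) * ((u + L : ℝ) : ℂ) ^ k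

noncomputable def Gi (k : ℂ) (L : ℝ) (s : ℂ) : ℂ :=
  ∫ t in Set.Ioi (0:ℝ), Complex.exp (-(t:ℂ)) * ((t:ℂ) + s * L) ^ k

lemma Fi_integrand_integrable (k : ℂ) {L : ℝ} (hL : 0 < L) {s : ℂ} (hs : 0 < s.re) :
    IntegrableOn (fun u : ℝ => Complex.exp (-(s * u)) * ((u + L : ℝ) : ℂ) ^ k) (Set.Ioi 0) := by
  refine Integrable.mono' (auxInt (ε := s.re) (A := 0) (L := L) hs (by linarith) k.re) ?_ ?_
  · exact (((Complex.continuous_exp.comp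
        ((continuous_const.mul Complex.continuous_ofReal).neg)).continuousOn).mul
        ((contOn_cpow_shift (A := 0) k (by linarith)).mono Ioi_subset_Ici_self)).aestronglyMeasurable measurableSet_Ioi
  · rw [ae_restrict_iff' measurableSet_Ioi]
    filter_upwards with u hu
    rw [norm_mul, norm_cexp_neg_mul, norm_ofReal_cpow (by have := mem_Ioi.mp hu; linarith)]

lemma cpow_norm_bound {z k : ℂ} {t M m0 : ℝ} (hm0 : 0 < m0) (h1 : m0 ≤ ‖z‖)
    (h2 : ‖z‖ ≤ M * (1 + t)) (hM : 1 ≤ M) (ht : 0 ≤ t) :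
    ‖z ^ k‖ ≤ Real.exp (Real.pi * |k.im|) * (M ^ |k.re| + m0 ^ (-|k.re|)) * (1 + t) ^ |k.re| := by
  have hz : z ≠ 0 := by
    intro h; rw [h] at h1; simp at h1; linarith
  rw [Complex.norm_cpow_of_ne_zero hz, div_eq_mul_inv, ← Real.exp_neg]
  have ht1 : (1:ℝ) ≤ 1 + t := by linarith
  have hexp : Real.exp (-(z.arg * k.im)) ≤ Real.exp (Real.pi * |k.im|) := by
    apply Real.exp_le_exp.mpr
    calc -(z.arg * k.im) ≤ |z.arg * k.im| := neg_le_abs _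
      _ = |z.arg| * |k.im| := abs_mul _ _
      _ ≤ Real.pi * |k.im| := by
          exact mul_le_mul_of_nonneg_right (Complex.abs_arg_le_pi z) (abs_nonneg _)
  have habs : ‖z‖ ^ k.re ≤ (M ^ |k.re| + m0 ^ (-|k.re|)) * (1 + t) ^ |k.re| := by
    rcases le_or_gt 0 k.re with h | h
    · have : ‖z‖ ^ k.re ≤ (M * (1 + t)) ^ k.re :=
        Real.rpow_le_rpow (norm_nonneg z) h2 h
      rw [Real.mul_rpow (by linarith) (by linarith)] at this
      have e1 : M ^ k.re ≤ M ^ |k.re| + m0 ^ (-|k.re|) := by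
        rw [abs_of_nonneg h]
        have := Real.rpow_pos_of_pos hm0 (-k.re)
        linarith
      refine this.trans ?_
      apply mul_le_mul e1 ?_ (Real.rpow_nonneg (by linarith) _) (by positivity)
      rw [abs_of_nonneg h]
    · have : ‖z‖ ^ k.re ≤ m0 ^ k.re :=
        Real.rpow_le_rpow_of_nonpos hm0 h1 h.le
      have e1 : m0 ^ k.re ≤ M ^ |k.re| + m0 ^ (-|k.re|) := by
        rw [abs_of_neg h, neg_neg]
        have := Real.rpow_pos_of_pos (lt_of_lt_of_le zero_lt_one hM) (-k.re)
        linarith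
      have e2 : (1:ℝ) ≤ (1 + t) ^ |k.re| := Real.one_le_rpow ht1 (abs_nonneg _)
      nlinarith [Real.rpow_nonneg (le_of_lt hm0) k.re,
        Real.rpow_pos_of_pos (lt_of_lt_of_le zero_lt_one hM) |k.re|]
  calc ‖z‖ ^ k.re * Real.exp (-(z.arg * k.im))
      ≤ ((M ^ |k.re| + m0 ^ (-|k.re|)) * (1 + t) ^ |k.re|) * Real.exp (Real.pi * |k.im|) := by
        apply mul_le_mul habs hexp (Real.exp_pos _).le
        positivity
    _ = _ := by ring

lemma Fi_meas (k : ℂ) {L : ℝ} (hL : 0 < L) (s : ℂ) :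
    AEStronglyMeasurable (fun u : ℝ => Complex.exp (-(s * u)) * ((u + L : ℝ) : ℂ) ^ k)
      (volume.restrict (Set.Ioi 0)) :=
  (((Complex.continuous_exp.comp
      ((continuous_const.mul Complex.continuous_ofReal).neg)).continuousOn).mul
    ((contOn_cpow_shift (A := 0) k (by linarith)).mono
      Set.Ioi_subset_Ici_self)).aestronglyMeasurable measurableSet_Ioi

lemma Fi_deriv_meas (k : ℂ) {L : ℝ} (hL : 0 < L) (s : ℂ) :
    AEStronglyMeasurable (fun u : ℝ => Complex.exp (-(s * u)) * (-(u:ℂ)) * ((u + L : ℝ) : ℂ) ^ k)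
      (volume.restrict (Set.Ioi 0)) :=
  ((((Complex.continuous_exp.comp
      ((continuous_const.mul Complex.continuous_ofReal).neg)).mul
        Complex.continuous_ofReal.neg).continuousOn).mul
    ((contOn_cpow_shift (A := 0) k (by linarith)).mono
      Set.Ioi_subset_Ici_self)).aestronglyMeasurable measurableSet_Ioi

lemma Fi_diff (k : ℂ) {L : ℝ} (hL : 0 < L) :
    DifferentiableOn ℂ (Fi k L) {s : ℂ | 0 < s.re} := by
  intro s₀ hs₀
  have hs₀' : 0 < s₀.re := hs₀
  have hε : 0 < s₀.re / 2 := half_pos hs₀'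
  have key := hasDerivAt_integral_of_dominated_loc_of_deriv_le
    (μ := volume.restrict (Set.Ioi (0:ℝ)))
    (F := fun (s : ℂ) (u : ℝ) => Complex.exp (-(s * u)) * ((u + L : ℝ) : ℂ) ^ k)
    (F' := fun (s : ℂ) (u : ℝ) => Complex.exp (-(s * u)) * (-(u:ℂ)) * ((u + L : ℝ) : ℂ) ^ k)
    (bound := fun u => Real.exp (-(s₀.re / 2 * u)) * (u + L) ^ (k.re + 1))
    (x₀ := s₀) (Metric.ball_mem_nhds s₀ hε)
    (Eventually.of_forall fun s => Fi_meas k hL s)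
    (Fi_integrand_integrable k hL hs₀')
    (Fi_deriv_meas k hL s₀) ?_ ?_ ?_
  · exact (key.2.differentiableAt).differentiableWithinAt
  · rw [ae_restrict_iff' measurableSet_Ioi]
    filter_upwards with u hu
    intro x hx
    have hu0 : 0 < u := hu
    have huL : 0 < u + L := by linarith
    have hxre : s₀.re / 2 ≤ x.re := by
      have h1 : |(x - s₀).re| ≤ ‖x - s₀‖ := Complex.abs_re_le_norm _
      rw [Metric.mem_ball, Complex.dist_eq] at hx
      have := abs_le.mp (h1.trans hx.le) |>.1
      simp only [Complex.sub_re] at this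
      linarith
    rw [norm_mul, norm_mul, norm_cexp_neg_mul, norm_ofReal_cpow huL, norm_neg,
      Complex.norm_real, Real.norm_of_nonneg hu0.le]
    calc Real.exp (-(x.re * u)) * u * (u + L) ^ k.re
        ≤ Real.exp (-(s₀.re / 2 * u)) * ((u + L) * (u + L) ^ k.re) := by
          rw [mul_assoc]
          apply mul_le_mul (Real.exp_le_exp.mpr (by nlinarith)) ?_ (by positivity)
            (Real.exp_pos _).le
          exact mul_le_mul_of_nonneg_right (by linarith) (Real.rpow_nonneg huL.le _)
      _ = Real.exp (-(s₀.re / 2 * u)) * (u + L) ^ (k.re + 1) := by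
          rw [Real.rpow_add_one huL.ne']; ring
  · exact auxInt (ε := s₀.re/2) hε (A := 0) (L := L) (by linarith) (k.re + 1)
  · rw [ae_restrict_iff' measurableSet_Ioi]
    filter_upwards with u hu
    intro x hx
    have h1 : HasDerivAt (fun s : ℂ => -(s * (u:ℂ))) (-(u:ℂ)) x := by
      exact (hasDerivAt_mul_const (u:ℂ)).neg
    simpa [mul_assoc] using (h1.cexp).mul_const (((u + L : ℝ) : ℂ) ^ k)

lemma Gi_contOn' (c : ℂ) {L : ℝ} (hL : 0 < L) {s : ℂ} (hs : 0 < s.re) :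
    ContinuousOn (fun t : ℝ => ((t:ℂ) + s * L) ^ c) (Set.Ici 0) := by
  intro t ht
  have hre : 0 < ((t:ℂ) + s * L).re := by
    simp only [Complex.add_re, Complex.ofReal_re, Complex.mul_re, Complex.ofReal_im,
      Complex.ofReal_re]
    have := mem_Ici.mp ht
    nlinarith [mul_pos hs hL]
  exact ContinuousAt.continuousWithinAt
    (ContinuousAt.comp (g := fun z : ℂ => z ^ c)
      (continuousAt_cpow_const (Complex.mem_slitPlane_iff.mpr (Or.inl hre)))
      ((Complex.continuous_ofReal.continuousAt).add continuousAt_const))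

lemma Gi_contOn (k : ℂ) {L : ℝ} (hL : 0 < L) {s : ℂ} (hs : 0 < s.re) :
    ContinuousOn (fun t : ℝ => Complex.exp (-(t:ℂ)) * ((t:ℂ) + s * L) ^ k) (Set.Ici 0) :=
  ((Complex.continuous_exp.comp Complex.continuous_ofReal.neg).continuousOn).mul
    (Gi_contOn' k hL hs)

lemma Gi_norm_le (k : ℂ) {L : ℝ} (hL : 0 < L) {x : ℂ} {t m0 M : ℝ} (hm0 : 0 < m0)
    (hm0' : m0 ≤ x.re * L) (hM : 1 ≤ M) (hM' : ‖x‖ * L ≤ M) (ht : 0 < t) :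
    ‖((t:ℂ) + x * L) ^ k‖ ≤
      Real.exp (Real.pi * |k.im|) * (M ^ |k.re| + m0 ^ (-|k.re|)) * (1 + t) ^ |k.re| := by
  apply cpow_norm_bound hm0 ?_ ?_ hM ht.le
  · calc m0 ≤ x.re * L := hm0'
      _ ≤ t + x.re * L := by linarith
      _ = ((t:ℂ) + x * L).re := by
          simp [Complex.add_re, Complex.mul_re, Complex.ofReal_re, Complex.ofReal_im]
      _ ≤ ‖(t:ℂ) + x * L‖ := Complex.re_le_norm _
  · calc ‖(t:ℂ) + x * L‖ ≤ ‖(t:ℂ)‖ + ‖x * L‖ :=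
        norm_add_le _ _
      _ = t + ‖x‖ * L := by
          rw [Complex.norm_real, Real.norm_of_nonneg ht.le, norm_mul, Complex.norm_real, Real.norm_of_nonneg hL.le]
      _ ≤ M * (1 + t) := by nlinarith

lemma Gi_integrand_integrable (k : ℂ) {L : ℝ} (hL : 0 < L) {s : ℂ} (hs : 0 < s.re) :
    IntegrableOn (fun t : ℝ => Complex.exp (-(t:ℂ)) * ((t:ℂ) + s * L) ^ k) (Set.Ioi 0) := by
  set m0 := s.re * L with hm0def
  set M := max 1 (‖s‖ * L) with hMdef
  have hm0 : 0 < m0 := mul_pos hs hL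
  set C := Real.exp (Real.pi * |k.im|) * (M ^ |k.re| + m0 ^ (-|k.re|)) with hCdef
  refine Integrable.mono'
    ((auxInt (ε := 1) one_pos (A := 0) (L := 1) (by norm_num) |k.re|).const_mul C)
    (((Gi_contOn k hL hs).mono Set.Ioi_subset_Ici_self).aestronglyMeasurable measurableSet_Ioi) ?_
  rw [ae_restrict_iff' measurableSet_Ioi]
  filter_upwards with t ht
  have ht0 : 0 < t := ht
  rw [norm_mul]
  have h1 : ‖Complex.exp (-(t:ℂ))‖ = Real.exp (-t) := by
    rw [Complex.norm_exp, Complex.neg_re, Complex.ofReal_re]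
  rw [h1]
  have h2 := Gi_norm_le k hL hm0 le_rfl (le_max_left _ _) (le_max_right _ _) ht0
  calc Real.exp (-t) * ‖((t:ℂ) + s * L) ^ k‖
      ≤ Real.exp (-t) * (C * (1 + t) ^ |k.re|) :=
        mul_le_mul_of_nonneg_left h2 (Real.exp_pos _).le
    _ = C * (Real.exp (-(1*t)) * (t + 1) ^ |k.re|) := by rw [add_comm 1 t, one_mul]; ring

lemma Gi_diff (k : ℂ) {L : ℝ} (hL : 0 < L) :
    DifferentiableOn ℂ (Gi k L) {s : ℂ | 0 < s.re} := by
  intro s₀ hs₀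
  have hs₀' : 0 < s₀.re := hs₀
  have hε : 0 < min (s₀.re / 2) 1 := lt_min (half_pos hs₀') one_pos
  set m0 := s₀.re / 2 * L with hm0def
  have hm0 : 0 < m0 := mul_pos (half_pos hs₀') hL
  set M := max 1 ((‖s₀‖ + 1) * L) with hMdef
  set p := (k - 1) with hpdef
  set C := ‖k‖ * L * (Real.exp (Real.pi * |p.im|) * (M ^ |p.re| + m0 ^ (-|p.re|)))
    with hCdef
  have hxball : ∀ x ∈ Metric.ball s₀ (min (s₀.re / 2) 1),
      s₀.re / 2 ≤ x.re ∧ ‖x‖ ≤ ‖s₀‖ + 1 := by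
    intro x hx
    rw [Metric.mem_ball, Complex.dist_eq] at hx
    constructor
    · have h1 : |(x - s₀).re| ≤ ‖x - s₀‖ := Complex.abs_re_le_norm _
      have := abs_le.mp (h1.trans (hx.trans_le (min_le_left _ _)).le) |>.1
      simp only [Complex.sub_re] at this
      linarith
    · have h3 : ‖x‖ - ‖s₀‖ ≤ ‖x - s₀‖ := by
        exact norm_sub_norm_le x s₀
      have h2 := hx.trans_le (min_le_right _ _)
      linarith
  have key := hasDerivAt_integral_of_dominated_loc_of_deriv_le
    (μ := volume.restrict (Set.Ioi (0:ℝ)))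
    (F := fun (s : ℂ) (t : ℝ) => Complex.exp (-(t:ℂ)) * ((t:ℂ) + s * L) ^ k)
    (F' := fun (s : ℂ) (t : ℝ) => Complex.exp (-(t:ℂ)) * (k * ((t:ℂ) + s * L) ^ (k - 1) * L))
    (bound := fun t => C * (Real.exp (-(1*t)) * (t + 1) ^ |p.re|))
    (x₀ := s₀) (Metric.ball_mem_nhds s₀ hε) ?_ (Gi_integrand_integrable k hL hs₀') ?_ ?_ ?_ ?_
  · exact (key.2.differentiableAt).differentiableWithinAt
  · filter_upwards [(isOpen_lt continuous_const Complex.continuous_re).eventually_mem hs₀]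
      with x hx
    exact ((Gi_contOn k hL hx).mono Set.Ioi_subset_Ici_self).aestronglyMeasurable
      measurableSet_Ioi
  · refine (ContinuousOn.mul
      ((Complex.continuous_exp.comp Complex.continuous_ofReal.neg).continuousOn)
      ((continuousOn_const.mul (Gi_contOn' (k-1) hL hs₀')).mul continuousOn_const)).mono
        Set.Ioi_subset_Ici_self |>.aestronglyMeasurable measurableSet_Ioi
  · rw [ae_restrict_iff' measurableSet_Ioi]
    filter_upwards with t ht
    intro x hx
    obtain ⟨hx1, hx2⟩ := hxball x hx
    have ht0 : 0 < t := ht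
    have h1 : ‖Complex.exp (-(t:ℂ))‖ = Real.exp (-t) := by
      rw [Complex.norm_exp, Complex.neg_re, Complex.ofReal_re]
    have h2 : Real.exp (-t) ≤ Real.exp (-(1*t)) := by rw [one_mul]
    have hb := Gi_norm_le (k := k - 1) hL hm0
      (mul_le_mul_of_nonneg_right hx1 hL.le)
      (le_max_left 1 ((‖s₀‖ + 1) * L))
      ((mul_le_mul_of_nonneg_right hx2 hL.le).trans (le_max_right _ _)) ht0
    rw [norm_mul, h1, norm_mul, norm_mul, Complex.norm_real, Real.norm_of_nonneg hL.le]
    calc Real.exp (-t) * (‖k‖ * ‖((t:ℂ) + x * L) ^ (k-1)‖ * L)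
        ≤ Real.exp (-(1*t)) * (‖k‖ *
            (Real.exp (Real.pi * |p.im|) * (M ^ |p.re| + m0 ^ (-|p.re|)) * (1 + t) ^ |p.re|) * L) := by
          apply mul_le_mul h2 ?_ (by positivity) (Real.exp_pos _).le
          apply mul_le_mul_of_nonneg_right ?_ hL.le
          exact mul_le_mul_of_nonneg_left hb (norm_nonneg _)
      _ = C * (Real.exp (-(1*t)) * (t + 1) ^ |p.re|) := by rw [add_comm 1 t, hCdef]; ring
  · exact (auxInt (ε := 1) one_pos (A := 0) (L := 1) (by norm_num) |p.re|).const_mul C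
  · rw [ae_restrict_iff' measurableSet_Ioi]
    filter_upwards with t ht
    intro x hx
    obtain ⟨hx1, _⟩ := hxball x hx
    have ht0 : 0 < t := ht
    have hre : 0 < ((t:ℂ) + x * L).re := by
      simp only [Complex.add_re, Complex.ofReal_re, Complex.mul_re, Complex.ofReal_im,
        Complex.ofReal_re]
      nlinarith [half_pos hs₀', hL]
    have hf : HasDerivAt (fun s : ℂ => (t:ℂ) + s * (L:ℂ)) (L:ℂ) x := by
      simpa using ((hasDerivAt_id x).mul_const (L:ℂ)).const_add (t:ℂ)
    exact (hf.cpow_const (Complex.mem_slitPlane_iff.mpr (Or.inl hre))).const_mul _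

lemma FG_real (k : ℂ) {L : ℝ} (hL : 0 < L) {σ : ℝ} (hσ : 0 < σ) :
    Gi k L (σ:ℂ) = ((σ:ℂ)) ^ (k+1) * Fi k L (σ:ℂ) := by
  have h := MeasureTheory.integral_comp_mul_left_Ioi
    (g := fun t : ℝ => Complex.exp (-(t:ℂ)) * ((t:ℂ) + (σ:ℂ) * L) ^ k) 0 hσ
  rw [mul_zero] at h
  have hGi : Gi k L (σ:ℂ) = σ • ∫ x in Set.Ioi (0:ℝ),
      Complex.exp (-((σ * x : ℝ):ℂ)) * (((σ * x : ℝ):ℂ) + (σ:ℂ) * L) ^ k := by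
    rw [h, smul_smul, mul_inv_cancel₀ hσ.ne', one_smul]; rfl
  rw [hGi]
  have hcongr : ∀ x ∈ Set.Ioi (0:ℝ),
      Complex.exp (-((σ * x : ℝ):ℂ)) * (((σ * x : ℝ):ℂ) + (σ:ℂ) * L) ^ k
      = (σ:ℂ) ^ k * (Complex.exp (-((σ:ℂ) * x)) * ((x + L : ℝ):ℂ) ^ k) := by
    intro x hx
    have hx0 : 0 < x := hx
    have e1 : (((σ * x : ℝ):ℂ) + (σ:ℂ) * L) = ((σ * (x + L) : ℝ):ℂ) := by push_cast; ring
    rw [e1, Complex.ofReal_mul σ (x+L), Complex.mul_cpow_ofReal_nonneg hσ.le (by linarith), Complex.ofReal_mul σ x]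
    ring
  rw [setIntegral_congr_fun measurableSet_Ioi hcongr, integral_const_mul,
    Complex.real_smul, Complex.cpow_add _ _ (Complex.ofReal_ne_zero.mpr hσ.ne'),
    Complex.cpow_one, Fi]
  ring

lemma FG_eq (k : ℂ) {L : ℝ} (hL : 0 < L) {s : ℂ} (hs : 0 < s.re) :
    Gi k L s = s ^ (k+1) * Fi k L s := by
  have hU : IsOpen {s : ℂ | 0 < s.re} := isOpen_lt continuous_const Complex.continuous_re
  have hG : AnalyticOnNhd ℂ (Gi k L) {s : ℂ | 0 < s.re} :=
    (Gi_diff k hL).analyticOnNhd hU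
  have hF : AnalyticOnNhd ℂ (fun s => s ^ (k+1) * Fi k L s) {s : ℂ | 0 < s.re} := by
    apply DifferentiableOn.analyticOnNhd ?_ hU
    apply DifferentiableOn.mul ?_ (Fi_diff k hL)
    intro z hz
    exact (((hasDerivAt_id z).cpow_const
      (Complex.mem_slitPlane_iff.mpr (Or.inl hz))).differentiableAt).differentiableWithinAt
  have hmem : (1:ℂ) ∈ {s : ℂ | 0 < s.re} := by norm_num
  have hfreq : ∃ᶠ z in nhdsWithin (1:ℂ) {(1:ℂ)}ᶜ, Gi k L z = z ^ (k+1) * Fi k L z := by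
    have htend : Tendsto (fun n : ℕ => ((1 + ((n:ℝ)+1)⁻¹ : ℝ) : ℂ)) atTop
        (nhdsWithin (1:ℂ) {(1:ℂ)}ᶜ) := by
      apply tendsto_nhdsWithin_of_tendsto_nhds_of_eventually_within
      · have : Tendsto (fun n : ℕ => (1 + ((n:ℝ)+1)⁻¹ : ℝ)) atTop (nhds 1) := by
          simpa using (tendsto_one_div_add_atTop_nhds_zero_nat (𝕜 := ℝ)).const_add 1
        have := (Complex.continuous_ofReal.tendsto 1).comp this
        simpa [Function.comp_def] using this
      · filter_upwards with n
        simp only [Set.mem_compl_iff, Set.mem_singleton_iff]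
        intro hcontra
        have : (1 + ((n:ℝ)+1)⁻¹ : ℝ) = 1 := by exact_mod_cast hcontra
        have hpos : 0 < ((n:ℝ)+1)⁻¹ := by positivity
        linarith
    apply htend.frequently
    apply Filter.Frequently.of_forall
    intro n
    exact FG_real k hL (by positivity)
  exact hG.eqOn_of_preconnected_of_frequently_eq hF
    ((convex_halfSpace_re_gt 0).isPreconnected) hmem hfreq hs

lemma uGamma_eval (k : ℂ) {L : ℝ} (hL : 0 < L) {s : ℂ} (hs : 0 < s.re) :
    ∫ τ in Set.Ioi L, Complex.exp (-(s * τ)) * ((τ:ℝ):ℂ) ^ k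
      = uGamma (1 + k) (s * (L:ℂ)) / s ^ (k+1) := by
  have hsne : s ≠ 0 := fun h => by simp [h] at hs
  have hne : s ^ (k+1) ≠ 0 := by
    intro h
    rw [Complex.cpow_eq_zero_iff] at h
    exact hsne h.1
  have hemb : MeasurableEmbedding (fun τ : ℝ => τ + L) := measurableEmbedding_addRight L
  have hpre : (fun τ : ℝ => τ + L) ⁻¹' (Set.Ioi L) = Set.Ioi 0 := by
    ext τ; simp [Set.mem_Ioi]
  have hshift : ∫ τ in Set.Ioi L, Complex.exp (-(s * τ)) * ((τ:ℝ):ℂ) ^ k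
      = ∫ u in Set.Ioi (0:ℝ), Complex.exp (-(s * ((u + L : ℝ):ℂ))) * (((u + L : ℝ)):ℂ) ^ k := by
    rw [← hpre]
    exact ((measurePreserving_add_right volume L).setIntegral_preimage_emb hemb
      (fun y : ℝ => Complex.exp (-(s * (y:ℂ))) * ((y:ℝ):ℂ) ^ k) (Set.Ioi L)).symm
  rw [hshift]
  have hcongr : ∀ u ∈ Set.Ioi (0:ℝ),
      Complex.exp (-(s * ((u + L : ℝ):ℂ))) * (((u + L : ℝ)):ℂ) ^ k
      = Complex.exp (-(s * (L:ℂ))) * (Complex.exp (-(s * u)) * (((u + L : ℝ)):ℂ) ^ k) := by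
    intro u hu
    rw [← mul_assoc, ← Complex.exp_add]
    congr 2
    push_cast
    ring
  rw [setIntegral_congr_fun measurableSet_Ioi hcongr, integral_const_mul]
  have hg : uGamma (1 + k) (s * (L:ℂ)) = Complex.exp (-(s * (L:ℂ))) * Gi k L s := by
    rw [uGamma, Gi, add_sub_cancel_left]
  rw [eq_div_iff hne, hg, FG_eq k hL hs, Fi]
  ring

lemma log_neg_pos {a b : ℝ} (ha : 0 < a) (hb : 0 < b) (hab : a * b < 1) :
    0 < -Real.log (a * b) := by
  have := Real.log_neg (mul_pos ha hb) hab
  linarith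

lemma phi_img {a b : ℝ} (ha : 0 < a) (hb : 0 < b) (hab : a * b < 1) :
    (fun τ : ℝ => Real.exp (-τ) / a) '' (Set.Ici (-Real.log (a * b))) = Set.Ioc 0 b := by
  ext y
  constructor
  · rintro ⟨τ, hτ, rfl⟩
    have hτ' : -τ ≤ Real.log (a * b) := by
      have := Set.mem_Ici.mp hτ; linarith
    constructor
    · positivity
    · have h1 : Real.exp (-τ) ≤ a * b := by
        calc Real.exp (-τ) ≤ Real.exp (Real.log (a * b)) := Real.exp_le_exp.mpr hτ'
          _ = a * b := Real.exp_log (mul_pos ha hb)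
      rw [div_le_iff₀ ha]; linarith [h1]
  · rintro ⟨hy0, hyb⟩
    refine ⟨-Real.log (a * y), ?_, ?_⟩
    · simp only [Set.mem_Ici, neg_le_neg_iff]
      exact Real.log_le_log (mul_pos ha hy0) (by nlinarith)
    · show Real.exp (-(-Real.log (a * y))) / a = y
      rw [neg_neg, Real.exp_log (mul_pos ha hy0)]
      field_simp
lemma phi_deriv {a : ℝ} (S : Set ℝ) : ∀ τ ∈ S,
    HasDerivWithinAt (fun τ : ℝ => Real.exp (-τ) / a) (-(Real.exp (-τ)) / a) S τ := by
  intro τ _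
  have h : HasDerivAt (fun τ : ℝ => Real.exp (-τ)) (-(Real.exp (-τ))) τ := by
    simpa using ((hasDerivAt_id τ).neg).exp
  exact (h.div_const a).hasDerivWithinAt

lemma phi_inj {a : ℝ} (ha : 0 < a) (S : Set ℝ) :
    Set.InjOn (fun τ : ℝ => Real.exp (-τ) / a) S := by
  intro x _ y _ h
  simp only [div_eq_div_iff ha.ne' ha.ne'] at h
  have h2 : Real.exp (-x) = Real.exp (-y) := by
    have := mul_right_cancel₀ ha.ne' h
    linarith [this]
  have := Real.exp_injective h2
  linarith [neg_injective this]

lemma contOn_cpow (k : ℂ) {A : ℝ} (hA : 0 < A) :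
    ContinuousOn (fun τ : ℝ => ((τ:ℝ):ℂ) ^ k) (Set.Ici A) := by
  intro τ hτ
  have h : (0:ℝ) < τ := lt_of_lt_of_le hA hτ
  exact ContinuousAt.continuousWithinAt
    (ContinuousAt.comp (g := fun z : ℂ => z ^ k)
      (continuousAt_cpow_const (Complex.mem_slitPlane_iff.mpr (Or.inl (by simpa using h))))
      Complex.continuous_ofReal.continuousAt)

lemma exp_cpow_integrable (k : ℂ) {L : ℝ} (hL : 0 < L) {s : ℂ} (hs : 0 < s.re) :
    IntegrableOn (fun τ : ℝ => Complex.exp (-(s * τ)) * ((τ:ℝ):ℂ) ^ k) (Set.Ici L) := by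
  rw [integrableOn_Ici_iff_integrableOn_Ioi]
  refine Integrable.mono' (auxInt (ε := s.re) (A := L) (L := 0) hs (by linarith) k.re) ?_ ?_
  · exact (((Complex.continuous_exp.comp
      ((continuous_const.mul Complex.continuous_ofReal).neg)).continuousOn).mul
      ((contOn_cpow k hL).mono Set.Ioi_subset_Ici_self)).aestronglyMeasurable measurableSet_Ioi
  · rw [ae_restrict_iff' measurableSet_Ioi]
    filter_upwards with τ hτ
    have hτ0 : 0 < τ := lt_trans hL hτ
    rw [norm_mul, norm_cexp_neg_mul, norm_ofReal_cpow hτ0, add_zero]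

lemma phi_point {a : ℝ} (ha : 0 < a) (s k : ℂ) {τ : ℝ} (hτ : 0 < τ) :
    |(-(Real.exp (-τ)) / a)| • ((((Real.exp (-τ) / a : ℝ)):ℂ) ^ (s - 1) *
        (-(Complex.log ((a:ℂ) * ((Real.exp (-τ) / a : ℝ):ℂ)))) ^ k)
      = (a:ℂ) ^ (-s) * (Complex.exp (-(s * τ)) * ((τ:ℝ):ℂ) ^ k) := by
  set r : ℝ := Real.exp (-τ) / a with hr
  have hrpos : 0 < r := by positivity
  have h1 : |(-(Real.exp (-τ)) / a)| = r := by
    rw [abs_div, abs_neg, abs_of_pos (Real.exp_pos _), abs_of_pos ha]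
  have h2 : (a:ℂ) * (r:ℂ) = ((Real.exp (-τ) : ℝ):ℂ) := by
    rw [← Complex.ofReal_mul]
    congr 1
    rw [hr, mul_div_cancel₀ _ ha.ne']
  have h3 : Complex.log ((a:ℂ) * (r:ℂ)) = ((-τ : ℝ):ℂ) := by
    rw [h2, ← Complex.ofReal_log (Real.exp_pos _).le, Real.log_exp]
  rw [h1, h3]
  have h4 : (-(((-τ:ℝ)):ℂ)) = ((τ:ℝ):ℂ) := by push_cast; ring
  rw [h4, Complex.real_smul, ← mul_assoc]
  have h5 : (r:ℂ) ≠ 0 := Complex.ofReal_ne_zero.mpr hrpos.ne'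
  have h6 : (r:ℂ) * (r:ℂ)^(s-1) = (r:ℂ)^s := by
    conv_rhs => rw [show s = 1 + (s-1) by ring]
    rw [Complex.cpow_add _ _ h5, Complex.cpow_one]
  rw [h6]
  have h7 : (r:ℂ)^s = Complex.exp (-(s*τ)) * (a:ℂ)^(-s) := by
    have e1 : (r:ℝ) = Real.exp (-τ) * a⁻¹ := by rw [hr, div_eq_mul_inv]
    rw [e1, Complex.ofReal_mul,
      Complex.mul_cpow_ofReal_nonneg (Real.exp_pos _).le (inv_nonneg.mpr ha.le)]
    congr 1
    · rw [Complex.cpow_def_of_ne_zero (Complex.ofReal_ne_zero.mpr (Real.exp_pos _).ne')]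
      rw [← Complex.ofReal_log (Real.exp_pos _).le, Real.log_exp]
      congr 1
      push_cast
      ring
    · rw [Complex.ofReal_inv, Complex.inv_cpow _ _ ?_, ← Complex.cpow_neg]
      rw [Complex.arg_ofReal_of_nonneg ha.le]
      exact Ne.symm Real.pi_ne_zero
  rw [h7]
  ring

lemma xint {a b : ℝ} (ha : 0 < a) (hb : 0 < b) (hab : a * b < 1) (k : ℂ) {s : ℂ}
    (hs : 0 < s.re) :
    ∫ x in Set.Ioc (0:ℝ) b, ((x:ℂ) ^ (s - 1) * (-(Complex.log ((a:ℂ) * (x:ℂ)))) ^ k)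
      = (a:ℂ) ^ (-s) *
        (uGamma (1 + k) (s * ((-Real.log (a*b) : ℝ):ℂ)) / s ^ (k+1)) := by
  have hL := log_neg_pos ha hb hab
  set L := -Real.log (a * b) with hLdef
  rw [← phi_img ha hb hab, integral_image_eq_integral_abs_deriv_smul measurableSet_Ici
    (phi_deriv _) (phi_inj ha _)
    (fun x : ℝ => ((x:ℂ) ^ (s - 1) * (-(Complex.log ((a:ℂ) * (x:ℂ)))) ^ k))]
  rw [setIntegral_congr_fun measurableSet_Ici
    (fun τ hτ => phi_point ha s k (lt_of_lt_of_le hL hτ))]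
  rw [integral_const_mul, MeasureTheory.integral_Ici_eq_integral_Ioi, uGamma_eval k hL hs]

lemma xint_integrable {a b : ℝ} (ha : 0 < a) (hb : 0 < b) (hab : a * b < 1) (k : ℂ) {s : ℂ}
    (hs : 0 < s.re) :
    IntegrableOn (fun x : ℝ => (x:ℂ) ^ (s - 1) * (-(Complex.log ((a:ℂ) * (x:ℂ)))) ^ k)
      (Set.Ioc 0 b) := by
  have hL := log_neg_pos ha hb hab
  set L := -Real.log (a * b) with hLdef
  rw [← phi_img ha hb hab, MeasureTheory.integrableOn_image_iff_integrableOn_abs_deriv_smul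
    measurableSet_Ici (phi_deriv _) (phi_inj ha _)]
  apply IntegrableOn.congr_fun ?_ (fun τ hτ => (phi_point ha s k (lt_of_lt_of_le hL hτ)).symm)
    measurableSet_Ici
  exact (exp_cpow_integrable k hL hs).const_mul _

lemma ofReal_mul_cpow {r : ℝ} (hr : 0 < r) {z : ℂ} (hz : z ≠ 0) (w : ℂ) :
    ((r:ℂ) * z) ^ w = (r:ℂ) ^ w * z ^ w := by
  have hr' : (r:ℂ) ≠ 0 := Complex.ofReal_ne_zero.mpr hr.ne'
  rw [Complex.cpow_def_of_ne_zero (mul_ne_zero hr' hz),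
    Complex.cpow_def_of_ne_zero hr', Complex.cpow_def_of_ne_zero hz,
    Complex.log_ofReal_mul hr hz, ← Complex.exp_add, ← Complex.ofReal_log hr.le]
  congr 1
  ring

lemma series_pointwise {a : ℝ} (ha : 0 < a) {α : ℂ} (hα : α ≠ 0) (k m v : ℂ) {x : ℝ}
    (hx : 0 < x) :
    (x:ℂ) ^ (m - 1) * besselJ v ((x:ℂ) * α) * (-(Complex.log ((a:ℂ) * (x:ℂ)))) ^ k
    = ∑' j : ℕ, ((-1:ℂ)^j * (α/2) ^ (2*(j:ℂ)+v)
          / ((Nat.factorial j : ℂ) * Complex.Gamma ((j:ℂ)+v+1)))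
        * ((x:ℂ) ^ (2*(j:ℂ) + m + v - 1) * (-(Complex.log ((a:ℂ) * (x:ℂ)))) ^ k) := by
  rw [besselJ, ← tsum_mul_left (a := (x:ℂ)^(m-1)), ← tsum_mul_right]
  apply tsum_congr
  intro j
  have hx0 : (x:ℂ) ≠ 0 := Complex.ofReal_ne_zero.mpr hx.ne'
  have hα2 : α / 2 ≠ 0 := div_ne_zero hα two_ne_zero
  rw [show (x:ℂ) * α / 2 = (x:ℂ) * (α/2) by ring,
    ofReal_mul_cpow hx hα2]
  have hxadd : (x:ℂ)^(m-1) * (x:ℂ)^(2*(j:ℂ)+v) = (x:ℂ)^(2*(j:ℂ)+m+v-1) := by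
    rw [← Complex.cpow_add _ _ hx0]
    congr 1
    ring
  rw [← hxadd]
  ring

lemma phi_point_real {a : ℝ} (ha : 0 < a) (σ c : ℝ) {τ : ℝ} (hτ : 0 < τ) :
    |(-(Real.exp (-τ)) / a)| • ((Real.exp (-τ) / a) ^ (σ - 1) *
        (-Real.log (a * (Real.exp (-τ) / a))) ^ c)
      = a ^ (-σ) * (Real.exp (-(σ * τ)) * τ ^ c) := by
  set r : ℝ := Real.exp (-τ) / a with hr
  have hrpos : 0 < r := by positivity
  have h1 : |(-(Real.exp (-τ)) / a)| = r := by
    rw [abs_div, abs_neg, abs_of_pos (Real.exp_pos _), abs_of_pos ha]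
  have h2 : a * r = Real.exp (-τ) := by rw [hr, mul_div_cancel₀ _ ha.ne']
  rw [h1, h2, Real.log_exp, neg_neg, smul_eq_mul, ← mul_assoc]
  have h6 : r * r ^ (σ - 1) = r ^ σ := by
    rw [Real.rpow_sub_one hrpos.ne', mul_div_cancel₀ _ hrpos.ne']
  rw [h6, hr, Real.div_rpow (Real.exp_pos _).le ha.le, ← Real.exp_mul,
    Real.rpow_neg ha.le, div_eq_mul_inv]
  ring_nf


set_option maxHeartbeats 1000000 in
lemma g0_integrable {a b : ℝ} (ha : 0 < a) (hb : 0 < b) (hab : a*b < 1) {σ : ℝ} (hσ : 0 < σ)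
    (c : ℝ) :
    IntegrableOn (fun x : ℝ => x ^ (σ - 1) * (-Real.log (a * x)) ^ c) (Set.Ioc 0 b) := by
  have hL := log_neg_pos ha hb hab
  set L := -Real.log (a * b)
  rw [← phi_img ha hb hab, MeasureTheory.integrableOn_image_iff_integrableOn_abs_deriv_smul
    measurableSet_Ici (phi_deriv _) (phi_inj ha _)]
  have base0 : IntegrableOn (fun τ : ℝ => Real.exp (-(σ * τ)) * τ ^ c) (Set.Ici L) := by
    rw [integrableOn_Ici_iff_integrableOn_Ioi]
    exact (auxInt (ε := σ) (A := L) (L := 0) hσ (by linarith) c).congr_fun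
      (fun τ hτ => by simp only [add_zero]) measurableSet_Ioi
  have base : IntegrableOn (fun τ : ℝ => a ^ (-σ) * (Real.exp (-(σ * τ)) * τ ^ c))
      (Set.Ici L) := base0.const_mul _
  exact base.congr_fun
    (fun τ hτ => (phi_point_real ha σ c (lt_of_lt_of_le hL hτ)).symm) measurableSet_Ici

lemma norm_integrand {a : ℝ} (ha : 0 < a) {x : ℝ} (hx : 0 < x) (hax : a * x < 1) (s k : ℂ) :
    ‖(x:ℂ) ^ (s - 1) * (-(Complex.log ((a:ℂ) * (x:ℂ)))) ^ k‖
      = x ^ (s.re - 1) * (-Real.log (a*x)) ^ k.re := by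
  have hy : 0 < -Real.log (a*x) := log_neg_pos ha hx hax
  have hclog : -(Complex.log ((a:ℂ) * (x:ℂ))) = ((-Real.log (a*x) : ℝ):ℂ) := by
    rw [← Complex.ofReal_mul, ← Complex.ofReal_log (mul_pos ha hx).le, ← Complex.ofReal_neg]
  rw [hclog, norm_mul, norm_ofReal_cpow hx, norm_ofReal_cpow hy, Complex.sub_re, Complex.one_re]

lemma csummable {b : ℝ} (hb : 0 < b) {α : ℂ} (hα2 : α/2 ≠ 0) (v : ℂ) {K : ℝ} (hK : 0 ≤ K) :
    Summable (fun j : ℕ => ‖(-1:ℂ)^j * (α/2) ^ (2*(j:ℂ)+v)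
      / ((Nat.factorial j : ℂ) * Complex.Gamma ((j:ℂ)+v+1))‖ * b ^ (2*(j:ℝ)) * K) := by
  set cf : ℕ → ℂ := fun j => (-1:ℂ)^j * (α/2) ^ (2*(j:ℂ)+v)
      / ((Nat.factorial j : ℂ) * Complex.Gamma ((j:ℂ)+v+1)) with hcf
  set d : ℕ → ℝ := fun j => ‖cf j‖ * b ^ (2*(j:ℝ)) * K with hd
  have hdnn : ∀ j, 0 ≤ d j := fun j => by
    apply mul_nonneg (mul_nonneg (norm_nonneg _) (Real.rpow_nonneg hb.le _)) hK
  apply summable_of_ratio_norm_eventually_le (r := 1/2) (by norm_num)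
  obtain ⟨N, hN⟩ := exists_nat_ge (max (‖v‖ + 1) (2 * (‖α/2‖^2 * b^2)))
  filter_upwards [eventually_ge_atTop N] with j hj
  have hjR : max (‖v‖ + 1) (2 * (‖α/2‖^2 * b^2)) ≤ (j:ℝ) := hN.trans (by exact_mod_cast hj)
  have hj1 : ‖v‖ + 1 ≤ (j:ℝ) := (le_max_left _ _).trans hjR
  have hj2 : 2 * (‖α/2‖^2 * b^2) ≤ (j:ℝ) := (le_max_right _ _).trans hjR
  have hnorm1 : (1:ℝ) ≤ ‖(j:ℂ)+v+1‖ := by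
    have h1 : ‖((j:ℕ):ℂ)+1‖ - ‖-v‖ ≤ ‖(((j:ℕ):ℂ)+1) - (-v)‖ := norm_sub_norm_le _ _
    have h2 : ‖((j:ℕ):ℂ)+1‖ = (j:ℝ)+1 := by
      rw [show ((j:ℕ):ℂ)+1 = ((j+1:ℕ):ℂ) by push_cast; ring, Complex.norm_natCast]
      push_cast; ring
    have h3 : (((j:ℕ):ℂ)+1) - (-v) = (j:ℂ)+v+1 := by ring
    rw [h2, h3, norm_neg] at h1
    linarith
  have hjv0 : (j:ℂ)+v+1 ≠ 0 := by
    intro h; rw [h] at hnorm1; simp at hnorm1; linarith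
  have hGrec : Complex.Gamma ((((j+1:ℕ)):ℂ) + v + 1)
      = ((j:ℂ)+v+1) * Complex.Gamma ((j:ℂ)+v+1) := by
    rw [show (((j+1:ℕ)):ℂ) + v + 1 = ((j:ℂ)+v+1) + 1 by push_cast; ring]
    exact Complex.Gamma_add_one _ hjv0
  have hcrec : cf (j+1) = cf j * ((-((α/2) ^ ((2:ℕ):ℂ))) / ((((j+1:ℕ)):ℂ) * ((j:ℂ)+v+1))) := by
    rw [hcf]
    simp only
    rw [show 2*(((j+1:ℕ)):ℂ)+v = (2*(j:ℂ)+v) + ((2:ℕ):ℂ) by push_cast; ring,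
      Complex.cpow_add _ _ hα2, hGrec,
      show ((Nat.factorial (j+1) : ℕ):ℂ) = (((j+1:ℕ)):ℂ) * ((Nat.factorial j : ℕ):ℂ) by
        rw [Nat.factorial_succ]; push_cast; ring,
      pow_succ]
    rw [div_mul_div_comm]
    congr 1
    · ring
    · ring
  have hnormrec : ‖cf (j+1)‖ = ‖cf j‖ * (‖α/2‖^2 / (((j:ℝ)+1) * ‖(j:ℂ)+v+1‖)) := by
    rw [hcrec]
    simp only [norm_mul, norm_div, norm_neg, Complex.cpow_natCast, norm_pow,
      Complex.norm_natCast]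
    push_cast
    ring
  have hb2 : b ^ (2*((j+1:ℕ):ℝ)) = b ^ (2*(j:ℝ)) * b^2 := by
    rw [show (2*((j+1:ℕ):ℝ)) = 2*(j:ℝ) + (2:ℕ) by push_cast; ring,
      Real.rpow_add hb, Real.rpow_natCast]
  have hq : ‖α/2‖^2 / (((j:ℝ)+1) * ‖(j:ℂ)+v+1‖) * b^2 ≤ 1/2 := by
    have hden : (j:ℝ) ≤ ((j:ℝ)+1) * ‖(j:ℂ)+v+1‖ := by nlinarith [Nat.cast_nonneg (α := ℝ) j]
    have hdenpos : 0 < ((j:ℝ)+1) * ‖(j:ℂ)+v+1‖ := by positivity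
    rw [div_mul_eq_mul_div, div_le_iff₀ hdenpos]
    nlinarith [norm_nonneg (α/2), sq_nonneg ‖α/2‖, mul_pos hb hb]
  have key : d (j+1) ≤ (1/2) * d j := by
    have : d (j+1) = (d j) * (‖α/2‖^2 / (((j:ℝ)+1) * ‖(j:ℂ)+v+1‖) * b^2) := by
      rw [hd]
      simp only
      rw [hnormrec, hb2]
      ring
    rw [this, mul_comm ((1:ℝ)/2) (d j)]
    exact mul_le_mul_of_nonneg_left hq (hdnn j)
  rw [Real.norm_of_nonneg (hdnn _), Real.norm_of_nonneg (hdnn _)]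
  exact key

theorem stmt18 (a b : ℝ) (hb : 0 < b) (ha : 0 < a) (hab : a * b < 1)
    (α : ℂ) (hα : α ∈ Complex.slitPlane) (k m v : ℂ) (hmv : 0 < (m + v).re) :
    (∫ x in (0:ℝ)..b, (x:ℂ) ^ (m - 1) * besselJ v ((x:ℂ) * α)
        * (-(Complex.log ((a:ℂ) * (x:ℂ)))) ^ k)
    = (a:ℂ) ^ (-m) * ∑' j : ℕ,
        (-1:ℂ) ^ j * (α / (2 * (a:ℂ))) ^ (2 * (j:ℂ) + v)
          * uGamma (1 + k) (-((2 * (j:ℂ) + m + v) * Complex.log ((a:ℂ) * (b:ℂ))))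
          / ((Nat.factorial j : ℂ) * Complex.Gamma (1 + (j:ℂ) + v)
              * (2 * (j:ℂ) + m + v) ^ (k + 1)) := by
  have hα0 : α ≠ 0 := by rintro rfl; simp [Complex.mem_slitPlane_iff] at hα
  have hα2 : α / 2 ≠ 0 := div_ne_zero hα0 two_ne_zero
  have ha0 : (a:ℂ) ≠ 0 := Complex.ofReal_ne_zero.mpr ha.ne'
  have hL := log_neg_pos ha hb hab
  have hsre : ∀ j : ℕ, 0 < (2*(j:ℂ) + m + v).re := by
    intro j
    have e : (2*(j:ℂ) + m + v).re = 2*(j:ℝ) + (m.re + v.re) := by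
      simp [Complex.add_re, Complex.mul_re]
      ring
    have e2 : (m + v).re = m.re + v.re := Complex.add_re m v
    rw [e]
    rw [e2] at hmv
    positivity
  set f : ℕ → ℝ → ℂ := fun j x =>
    ((-1:ℂ)^j * (α/2) ^ (2*(j:ℂ)+v) / ((Nat.factorial j : ℂ) * Complex.Gamma ((j:ℂ)+v+1)))
      * ((x:ℂ) ^ (2*(j:ℂ) + m + v - 1) * (-(Complex.log ((a:ℂ) * (x:ℂ)))) ^ k) with hfdef
  have hfint : ∀ j, IntegrableOn (f j) (Set.Ioc 0 b) := fun j =>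
    (xint_integrable ha hb hab k (hsre j)).const_mul _
  set g₀ : ℝ → ℝ := fun x => x ^ ((m+v).re - 1) * (-Real.log (a * x)) ^ k.re with hg₀def
  have hg₀int : IntegrableOn g₀ (Set.Ioc 0 b) := g0_integrable ha hb hab hmv k.re
  set K := ∫ x in Set.Ioc (0:ℝ) b, g₀ x with hK
  have hK0 : 0 ≤ K := by
    apply setIntegral_nonneg measurableSet_Ioc
    intro x hx
    have hy : 0 < -Real.log (a*x) := log_neg_pos ha hx.1 (by nlinarith [hx.2])
    exact mul_nonneg (Real.rpow_nonneg hx.1.le _) (Real.rpow_nonneg hy.le _)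
  have hnormle : ∀ j, (∫ x in Set.Ioc (0:ℝ) b, ‖f j x‖)
      ≤ ‖(-1:ℂ)^j * (α/2) ^ (2*(j:ℂ)+v)
          / ((Nat.factorial j : ℂ) * Complex.Gamma ((j:ℂ)+v+1))‖ * b ^ (2*(j:ℝ)) * K := by
    intro j
    set cj := (-1:ℂ)^j * (α/2) ^ (2*(j:ℂ)+v)
      / ((Nat.factorial j : ℂ) * Complex.Gamma ((j:ℂ)+v+1)) with hcj
    have hle : ∀ x ∈ Set.Ioc (0:ℝ) b, ‖f j x‖ ≤ (‖cj‖ * b ^ (2*(j:ℝ))) * g₀ x := by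
      intro x hx
      obtain ⟨hx0, hxb⟩ := hx
      have hax1 : a * x < 1 := by nlinarith
      have hni := norm_integrand ha hx0 hax1 (2*(j:ℂ) + m + v) k
      rw [hfdef]
      simp only
      rw [norm_mul, hni]
      have hre : (2*(j:ℂ) + m + v).re - 1 = 2*(j:ℝ) + ((m+v).re - 1) := by
        simp [Complex.add_re, Complex.mul_re]
        ring
      have hsplit : x ^ ((2*(j:ℂ) + m + v).re - 1)
          = x ^ (2*(j:ℝ)) * x ^ ((m+v).re - 1) := by
        rw [hre, Real.rpow_add hx0]
      rw [hsplit, hg₀def]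
      have hxble : x ^ (2*(j:ℝ)) ≤ b ^ (2*(j:ℝ)) :=
        Real.rpow_le_rpow hx0.le hxb (by positivity)
      have hy : 0 < -Real.log (a*x) := log_neg_pos ha hx0 hax1
      calc ‖cj‖ * (x ^ (2*(j:ℝ)) * x ^ ((m+v).re - 1) * (-Real.log (a*x)) ^ k.re)
          = ‖cj‖ * (x ^ (2*(j:ℝ)) * (x ^ ((m+v).re - 1) * (-Real.log (a*x)) ^ k.re)) := by
            ring
        _ ≤ ‖cj‖ * (b ^ (2*(j:ℝ)) * (x ^ ((m+v).re - 1) * (-Real.log (a*x)) ^ k.re)) := by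
            apply mul_le_mul_of_nonneg_left ?_ (norm_nonneg _)
            apply mul_le_mul_of_nonneg_right hxble
            exact mul_nonneg (Real.rpow_nonneg hx0.le _) (Real.rpow_nonneg hy.le _)
        _ = (‖cj‖ * b ^ (2*(j:ℝ))) * (x ^ ((m+v).re - 1) * (-Real.log (a*x)) ^ k.re) := by
            ring
    calc (∫ x in Set.Ioc (0:ℝ) b, ‖f j x‖)
        ≤ ∫ x in Set.Ioc (0:ℝ) b, (‖cj‖ * b ^ (2*(j:ℝ))) * g₀ x :=
          setIntegral_mono_on (hfint j).norm (hg₀int.const_mul _) measurableSet_Ioc hle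
      _ = ‖cj‖ * b ^ (2*(j:ℝ)) * K := by rw [integral_const_mul, hK]
  have hsum : Summable (fun j : ℕ => ‖(-1:ℂ)^j * (α/2) ^ (2*(j:ℂ)+v)
      / ((Nat.factorial j : ℂ) * Complex.Gamma ((j:ℂ)+v+1))‖ * b ^ (2*(j:ℝ)) * K) :=
    csummable hb hα2 v hK0
  have hsum' : Summable (fun j => ∫ x in Set.Ioc (0:ℝ) b, ‖f j x‖) :=
    Summable.of_nonneg_of_le (fun j => integral_nonneg (fun x => norm_nonneg _)) hnormle hsum
  have interchange := MeasureTheory.integral_tsum_of_summable_integral_norm hfint hsum'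
  have einv : ∀ w : ℂ, (((a⁻¹ : ℝ)):ℂ) ^ w = (a:ℂ) ^ (-w) := by
    intro w
    rw [Complex.ofReal_inv, Complex.inv_cpow _ _ ?_, ← Complex.cpow_neg]
    rw [Complex.arg_ofReal_of_nonneg ha.le]
    exact Ne.symm Real.pi_ne_zero
  calc (∫ x in (0:ℝ)..b, (x:ℂ) ^ (m - 1) * besselJ v ((x:ℂ) * α)
        * (-(Complex.log ((a:ℂ) * (x:ℂ)))) ^ k)
      = ∫ x in Set.Ioc (0:ℝ) b, (x:ℂ) ^ (m - 1) * besselJ v ((x:ℂ) * α)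
          * (-(Complex.log ((a:ℂ) * (x:ℂ)))) ^ k := intervalIntegral.integral_of_le hb.le
    _ = ∫ x in Set.Ioc (0:ℝ) b, ∑' j : ℕ, f j x :=
        setIntegral_congr_fun measurableSet_Ioc
          (fun x hx => series_pointwise ha hα0 k m v hx.1)
    _ = ∑' j : ℕ, ∫ x in Set.Ioc (0:ℝ) b, f j x := interchange.symm
    _ = ∑' j : ℕ, (a:ℂ) ^ (-m) *
        ((-1:ℂ) ^ j * (α / (2 * (a:ℂ))) ^ (2 * (j:ℂ) + v)
          * uGamma (1 + k) (-((2 * (j:ℂ) + m + v) * Complex.log ((a:ℂ) * (b:ℂ))))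
          / ((Nat.factorial j : ℂ) * Complex.Gamma (1 + (j:ℂ) + v)
              * (2 * (j:ℂ) + m + v) ^ (k + 1))) := by
        apply tsum_congr
        intro j
        rw [hfdef]
        simp only
        rw [integral_const_mul, xint ha hb hab k (hsre j)]
        rw [show -((2*(j:ℂ)+m+v) * Complex.log ((a:ℂ)*(b:ℂ)))
            = (2*(j:ℂ)+m+v) * ((-Real.log (a*b) : ℝ):ℂ) by
          rw [← Complex.ofReal_mul, ← Complex.ofReal_log (mul_pos ha hb).le]
          push_cast; ring]
        rw [show α/(2*(a:ℂ)) = ((a⁻¹:ℝ):ℂ) * (α/2) by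
          rw [Complex.ofReal_inv]; field_simp]
        rw [ofReal_mul_cpow (inv_pos.mpr ha) hα2, einv]
        rw [show Complex.Gamma (1+(j:ℂ)+v) = Complex.Gamma ((j:ℂ)+v+1) by congr 1; ring]
        rw [show (a:ℂ)^(-(2*(j:ℂ)+m+v)) = (a:ℂ)^(-m) * (a:ℂ)^(-(2*(j:ℂ)+v)) by
          rw [← Complex.cpow_add _ _ ha0]; congr 1; ring]
        ring
    _ = (a:ℂ) ^ (-m) * ∑' j : ℕ,
        (-1:ℂ) ^ j * (α / (2 * (a:ℂ))) ^ (2 * (j:ℂ) + v)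
          * uGamma (1 + k) (-((2 * (j:ℂ) + m + v) * Complex.log ((a:ℂ) * (b:ℂ))))
          / ((Nat.factorial j : ℂ) * Complex.Gamma (1 + (j:ℂ) + v)
              * (2 * (j:ℂ) + m + v) ^ (k + 1)) := tsum_mul_left
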